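/- Let a be a positive integer that is divisible by 2 but not divisible by 10. Then for every integer n > 1, the number of nonzero digits in the decimal expansion of a^n is at least log_4(n), i.e., c_10(a^n) ≥ (log n)/(log 4). -/
import Mathlib

lemma key (l : List ℕ) : ∀ m : ℕ, (∀ d ∈ l, d < 10) →
    (∃ h t, l = h :: t ∧ h ≠ 0) → 2 ^ m ∣ Nat.ofDigits 10 l →
    m < 4 ^ (l.filter (· ≠ 0)).length := by
  induction l using List.reverseRecOn with
  | nil => rintro m _ ⟨h, t, ht, _⟩ _; simp at ht
  | append_singleton l' d ih =>
    rintro m hlt ⟨h0, t0, ht, hh⟩ hdvd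
    by_cases hd0 : d = 0
    · -- trailing zero digit: reduce to l'
      subst hd0
      have hval : Nat.ofDigits 10 (l' ++ [0]) = Nat.ofDigits 10 l' := by
        rw [Nat.ofDigits_append]; simp [Nat.ofDigits]
      have hcnt : ((l' ++ [(0:ℕ)]).filter (· ≠ 0)).length
          = (l'.filter (· ≠ 0)).length := by
        rw [List.filter_append, List.length_append]; simp
      have hne : ∃ h t, l' = h :: t ∧ h ≠ 0 := by
        cases l' with
        | nil => simp at ht; omega
        | cons h' t' =>
          simp only [List.cons_append, List.cons.injEq] at ht
          exact ⟨h', t', rfl, ht.1 ▸ hh⟩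
      rw [hcnt]
      exact ih m (fun x hx => hlt x (by simp [hx])) hne (hval ▸ hdvd)
    cases l' with
    | nil =>
      simp only [List.nil_append, List.cons.injEq] at ht
      have hd10 : d < 10 := hlt d (by simp)
      have hdvd' : 2 ^ m ∣ d := by
        have : Nat.ofDigits 10 ([] ++ [d]) = d := by simp [Nat.ofDigits]
        rwa [this] at hdvd
      have hled : 2 ^ m ≤ d := Nat.le_of_dvd (Nat.pos_of_ne_zero hd0) hdvd'
      have hm : m < 4 := by
        by_contra hc
        push_neg at hc
        have : (16:ℕ) ≤ 2 ^ m := by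
          calc (16:ℕ) = 2 ^ 4 := by norm_num
            _ ≤ 2 ^ m := Nat.pow_le_pow_right (by norm_num) hc
        omega
      have hlen : (([] ++ [d]).filter (· ≠ 0)).length = 1 := by
        simp [List.filter_singleton, hd0]
      rw [hlen, pow_one]
      exact hm
    | cons h' t' =>
      have hh' : h' ≠ 0 := by
        simp only [List.cons_append, List.cons.injEq] at ht
        exact ht.1 ▸ hh
      have hlt' : ∀ x ∈ h' :: t', x < 10 := fun x hx => hlt x (by simp at hx ⊢; tauto)
      have hne : ∃ h t, h' :: t' = h :: t ∧ h ≠ 0 := ⟨h', t', rfl, hh'⟩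
      set L := (h' :: t').length with hL
      set N' := Nat.ofDigits 10 (h' :: t') with hN'
      have hsplit : Nat.ofDigits 10 ((h' :: t') ++ [d]) = N' + d * 10 ^ L := by
        rw [Nat.ofDigits_append]; simp [Nat.ofDigits, hN', hL]; ring
      have hN'lt : N' < 10 ^ L := Nat.ofDigits_lt_base_pow_length (by norm_num) hlt'
      have hdvd' : 2 ^ m ∣ N' + d * 10 ^ L := hsplit ▸ hdvd
      have hdvd2 : 2 ^ (min m L) ∣ N' := by
        have h1 : 2 ^ (min m L) ∣ N' + d * 10 ^ L :=
          dvd_trans (pow_dvd_pow 2 (min_le_left _ _)) hdvd'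
        have h2 : (2:ℕ) ^ (min m L) ∣ d * 10 ^ L :=
          dvd_mul_of_dvd_right
            (dvd_trans (pow_dvd_pow 2 (min_le_right _ _))
              (pow_dvd_pow_of_dvd (by norm_num) L)) d
        exact (Nat.dvd_add_right h2).mp (by rwa [add_comm] at h1)
      have hIH := ih (min m L) hlt' hne hdvd2
      have hflen : (((h' :: t') ++ [d]).filter (· ≠ 0)).length
          = ((h' :: t').filter (· ≠ 0)).length + 1 := by
        rw [List.filter_append, List.length_append, List.filter_singleton]
        simp [hd0]
      rw [hflen]
      by_cases hcase : m ≤ L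
      · rw [min_eq_left hcase] at hIH
        calc m < 4 ^ ((h' :: t').filter (· ≠ 0)).length := hIH
          _ ≤ 4 ^ (((h' :: t').filter (· ≠ 0)).length + 1) :=
            Nat.pow_le_pow_right (by norm_num) (by omega)
      · push_neg at hcase
        rw [min_eq_right hcase.le] at hIH
        have hNlt : N' + d * 10 ^ L < 10 ^ (L + 1) := by
          have hd9 : d < 10 := hlt d (by simp)
          have : d * 10 ^ L ≤ 9 * 10 ^ L := Nat.mul_le_mul_right _ (by omega)
          calc N' + d * 10 ^ L < 10 ^ L + 9 * 10 ^ L := by omega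
            _ = 10 ^ (L + 1) := by ring
        have h2m : 2 ^ m ≤ N' + d * 10 ^ L := Nat.le_of_dvd (by positivity) hdvd'
        have hmlt : m < 4 * (L + 1) := by
          by_contra hc
          push_neg at hc
          have hx : (2:ℕ) ^ (4 * (L+1)) ≤ 2 ^ m := Nat.pow_le_pow_right (by norm_num) hc
          have h16 : (2:ℕ) ^ (4 * (L+1)) = 16 ^ (L+1) := by rw [pow_mul]; norm_num
          have h1016 : (10:ℕ) ^ (L+1) ≤ 16 ^ (L+1) := Nat.pow_le_pow_left (by norm_num) _
          omega
        calc m < 4 * (L + 1) := hmlt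
          _ ≤ 4 * 4 ^ ((h' :: t').filter (· ≠ 0)).length := by
              have : L + 1 ≤ 4 ^ ((h' :: t').filter (· ≠ 0)).length := hIH
              omega
          _ = 4 ^ (((h' :: t').filter (· ≠ 0)).length + 1) := by ring

/-- Number of nonzero digits in the base-`b` expansion of `N`. -/
def countNonzeroDigits (b N : ℕ) : ℕ :=
  ((Nat.digits b N).filter (· ≠ 0)).length

theorem stmt_1 (a : ℕ) (ha : 0 < a) (h2 : 2 ∣ a) (h10 : ¬ (10 ∣ a))
    (n : ℕ) (hn : 1 < n) :
    (countNonzeroDigits 10 (a ^ n) : ℝ) ≥ Real.log n / Real.log 4 := by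
  set N := a ^ n with hN
  have hNpos : 0 < N := pow_pos ha n
  have h5 : ¬ (5 ∣ a) := fun h5 => h10 (Nat.Coprime.mul_dvd_of_dvd_of_dvd (by norm_num) h2 h5)
  have h10N : ¬ (10 ∣ N) := by
    intro hd
    exact h5 (Nat.Prime.dvd_of_dvd_pow (by norm_num) (dvd_trans (by norm_num) hd))
  have h2N : 2 ^ n ∣ N := pow_dvd_pow_of_dvd h2 n
  have hdig : Nat.digits 10 N = (N % 10) :: Nat.digits 10 (N / 10) :=
    Nat.digits_def' (by norm_num) hNpos
  have hhead : N % 10 ≠ 0 := fun h => h10N (Nat.dvd_of_mod_eq_zero h)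
  have hk : n < 4 ^ countNonzeroDigits 10 N := by
    apply key (Nat.digits 10 N) n (fun d hd => Nat.digits_lt_base (by norm_num) hd)
      ⟨N % 10, Nat.digits 10 (N / 10), hdig, hhead⟩
    rwa [Nat.ofDigits_digits]
  set k := countNonzeroDigits 10 N with hkdef
  have hnk : (n : ℝ) ≤ (4:ℝ) ^ k := by
    have h1 : (n:ℝ) < ((4^k : ℕ):ℝ) := by exact_mod_cast hk
    push_cast at h1
    linarith
  have hlog4 : 0 < Real.log 4 := Real.log_pos (by norm_num)
  rw [ge_iff_le, div_le_iff₀ hlog4]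
  have hlogn : Real.log n ≤ Real.log ((4:ℝ) ^ k) :=
    Real.log_le_log (by positivity) hnk
  rw [Real.log_pow] at hlogn
  linarith
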